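/- arXiv:1302.2294 — 3 statements merged into one kernel-verified Lean document; each statement's English description precedes it below -/
import Mathlib

section
/- Let I be an ideal of germs of holomorphic functions at 0 in ℂⁿ with D(I) = dim_ℂ(O₀/I) finite. Then for every germ of a holomorphic curve φ : (ℂ,0) → (ℂⁿ,0), φ ≢ 0, there exists g ∈ I with ord₀(g ∘ φ) ≤ D(I) · ord₀ φ; that is, Δ₁(I,0) := sup_φ inf_{g∈I} (ord₀ φ*g)/(ord₀ φ) ≤ D(I). -/
open PowerSeries

lemma order_pow' (f : PowerSeries ℂ) (k : ℕ) : (f ^ k).order = k * f.order := by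
  induction k with
  | zero => simp [PowerSeries.order_one]
  | succ k ih =>
    rw [pow_succ, PowerSeries.order_mul, ih]
    push_cast
    ring

/-- Let I be an ideal of holomorphic germs at 0 in ℂⁿ (represented here by polynomials)
with D(I) = dim_ℂ(O₀/I) finite. Then for every nonzero germ of a holomorphic curve
φ : (ℂ,0) → (ℂⁿ,0) (components given by power series vanishing at 0) there exists g ∈ I
with ord₀(g ∘ φ) ≤ D(I) · ord₀ φ, where ord₀ φ = min_j ord₀ φⱼ;
that is, Δ₁(I,0) ≤ D(I). -/
theorem stmt_9 (n : ℕ) (I : Ideal (MvPolynomial (Fin n) ℂ))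
    (hfin : FiniteDimensional ℂ (MvPolynomial (Fin n) ℂ ⧸ I)) :
    ∀ φ : Fin n → PowerSeries ℂ,
      (∀ j, PowerSeries.constantCoeff (φ j) = 0) → φ ≠ 0 →
      ∃ g ∈ I, (MvPolynomial.aeval φ g : PowerSeries ℂ).order ≤
        (Module.finrank ℂ (MvPolynomial (Fin n) ℂ ⧸ I) : ℕ∞) * ⨅ j, (φ j).order := by
  intro φ hconst hφ
  classical
  set D := Module.finrank ℂ (MvPolynomial (Fin n) ℂ ⧸ I) with hD
  -- pick j₀ minimizing order
  have hne : Nonempty (Fin n) := by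
    rcases Nat.eq_zero_or_pos n with h | h
    · exfalso; apply hφ; funext j; exact absurd j.2 (by omega)
    · exact ⟨⟨0, h⟩⟩
  obtain ⟨j₀, hj₀⟩ := Finite.exists_min (fun j => (φ j).order)
  have hinf : (φ j₀).order = ⨅ j, (φ j).order :=
    le_antisymm (le_iInf hj₀) (iInf_le _ _)
  have hφj₀ : φ j₀ ≠ 0 := by
    intro h0
    apply hφ
    funext j
    have := hj₀ j
    rw [h0, PowerSeries.order_eq_top.mpr rfl, top_le_iff, PowerSeries.order_eq_top] at this
    exact this
  obtain ⟨m, hm⟩ : ∃ m : ℕ, (φ j₀).order = m := by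
    have := PowerSeries.order_eq_top.not.mpr hφj₀
    exact Option.ne_none_iff_exists'.mp this
  have hm1 : 1 ≤ m := by
    by_contra h
    have hm0 : m = 0 := by omega
    have : (PowerSeries.coeff 0) (φ j₀) ≠ 0 := by
      have := PowerSeries.coeff_order (φ := φ j₀) hφj₀
      simpa [hm, hm0] using this
    exact this (by simpa [PowerSeries.coeff_zero_eq_constantCoeff] using hconst j₀)
  -- linear dependence of powers of X j₀ in the quotient
  have hld : ¬ LinearIndependent ℂ
      (fun i : Fin (D + 1) => Ideal.Quotient.mk I ((MvPolynomial.X j₀ : MvPolynomial (Fin n) ℂ) ^ (i : ℕ))) := by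
    intro h
    have := h.fintype_card_le_finrank
    simp [hD] at this
  rw [Fintype.not_linearIndependent_iff] at hld
  obtain ⟨c, hc, i₀, hi₀⟩ := hld
  set g : MvPolynomial (Fin n) ℂ :=
    ∑ i : Fin (D + 1), MvPolynomial.C (c i) * MvPolynomial.X j₀ ^ (i : ℕ) with hg
  have hgI : g ∈ I := by
    rw [← Ideal.Quotient.eq_zero_iff_mem, hg, map_sum]
    rw [← hc]
    refine Finset.sum_congr rfl fun i _ => ?_
    rw [map_mul]
    have hC : (Ideal.Quotient.mk I) (MvPolynomial.C (c i))
        = algebraMap ℂ (MvPolynomial (Fin n) ℂ ⧸ I) (c i) := by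
      rw [← MvPolynomial.algebraMap_eq, Ideal.Quotient.mk_algebraMap]
    rw [hC, ← Algebra.smul_def]
  refine ⟨g, hgI, ?_⟩
  -- minimal index with nonzero coefficient
  have hSne : (Finset.univ.filter (fun i => c i ≠ 0)).Nonempty := ⟨i₀, by simp [hi₀]⟩
  set k₀ := (Finset.univ.filter (fun i => c i ≠ 0)).min' hSne with hk₀
  have hck₀ : c k₀ ≠ 0 := by
    have := Finset.min'_mem _ hSne
    simpa using this
  have hmin : ∀ i : Fin (D + 1), i < k₀ → c i = 0 := by
    intro i hi
    by_contra h
    exact absurd (Finset.min'_le _ i (by simp [h])) (not_le.mpr hi)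
  -- compute aeval
  have haeval : (MvPolynomial.aeval φ g : PowerSeries ℂ) =
      ∑ i : Fin (D + 1), PowerSeries.C (c i) * (φ j₀) ^ (i : ℕ) := by
    rw [hg, map_sum]
    congr 1
    funext i
    rw [map_mul, map_pow, MvPolynomial.aeval_X, MvPolynomial.aeval_C]
    rfl
  -- the coefficient at k₀ * m is nonzero
  have hcoeff : PowerSeries.coeff ((k₀ : ℕ) * m) (MvPolynomial.aeval φ g) ≠ 0 := by
    rw [haeval, map_sum]
    have hterm : ∀ i : Fin (D + 1), i ≠ k₀ →
        PowerSeries.coeff ((k₀ : ℕ) * m) (PowerSeries.C (c i) * (φ j₀) ^ (i : ℕ)) = 0 := by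
      intro i hi
      rcases lt_or_gt_of_ne hi with h | h
      · rw [hmin i h, map_zero, zero_mul, map_zero]
      · rw [PowerSeries.coeff_C_mul, PowerSeries.coeff_of_lt_order, mul_zero]
        rw [order_pow', hm]
        have : (k₀ : ℕ) * m < (i : ℕ) * m := by
          have hki : (k₀ : ℕ) < (i : ℕ) := h
          exact Nat.mul_lt_mul_of_lt_of_le hki (le_refl m) (by omega)
        exact_mod_cast Nat.cast_lt.mpr this
    rw [Finset.sum_eq_single k₀ (fun i _ hi => hterm i hi) (by simp)]
    rw [PowerSeries.coeff_C_mul]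
    apply mul_ne_zero hck₀
    have horder : ((φ j₀) ^ (k₀ : ℕ)).order = ((k₀ : ℕ) * m : ℕ) := by
      rw [order_pow', hm]; push_cast; ring
    have hlt : ((φ j₀) ^ (k₀ : ℕ)).order < ⊤ := by rw [horder]; exact WithTop.coe_lt_top _
    have := PowerSeries.coeff_order (φ := (φ j₀) ^ (k₀ : ℕ)) (pow_ne_zero _ hφj₀)
    rwa [horder, ENat.toNat_coe] at this
  have hle := PowerSeries.order_le _ hcoeff
  refine le_trans hle ?_
  rw [← hinf, hm]
  have hk₀D : (k₀ : ℕ) ≤ D := Nat.lt_succ_iff.mp k₀.2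
  calc ((((k₀ : ℕ) * m : ℕ) : ℕ∞)) = ((k₀ : ℕ) : ℕ∞) * (m : ℕ∞) := by push_cast; ring
    _ ≤ (D : ℕ∞) * (m : ℕ∞) := by
        apply mul_le_mul_left
        exact_mod_cast hk₀D
end

section
/- Let φ : (ℂ,0) → (ℂⁿ,0) be a nonconstant holomorphic curve germ and let r be a smooth real-valued function near 0 ∈ ℂⁿ with r(0) = 0. Define the pullback φ*r(t) = r(φ(t)). If φ*r has finite order of vanishing at 0 (as a function of t, t̄), and all pure derivatives (d/dt)^a φ*r(0) and (d/dt̄)^a φ*r(0) vanish for a up to the order, and the leading homogeneous part of the Taylor expansion of φ*r at 0 is nonnegative (plurisubharmonicity-type positivity), then the order of vanishing of φ*r at 0 is even. -/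
/-- (Formalizable version of the parity statement for pullbacks of pseudoconvex defining
functions.) If P(t,t̄) = Σ_{a+b=m} c_{a,b} t^a t̄^b is a real-valued homogeneous polynomial
of degree m in t, t̄ with no pure terms (c₀ = c_m = 0), P ≢ 0, and P ≥ 0 on a neighborhood
of 0, then m is even. -/
theorem stmt_16 (m : ℕ) (c : ℕ → ℂ)
    (hpure0 : c 0 = 0) (hpurem : c m = 0)
    (P : ℂ → ℂ)
    (hP : ∀ t, P t = ∑ a ∈ Finset.range (m + 1),
      c a * t ^ a * (starRingEnd ℂ t) ^ (m - a))
    (hreal : ∀ t, (P t).im = 0)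
    (hne : ∃ t, P t ≠ 0)
    (hnonneg : ∃ U ∈ nhds (0 : ℂ), ∀ t ∈ U, 0 ≤ (P t).re) :
    ∃ k, m = 2 * k := by
  -- homogeneity under real scalings
  have hom : ∀ (z : ℂ), (starRingEnd ℂ) z = z → ∀ t, P (z * t) = z ^ m * P t := by
    intro z hz t
    rw [hP, hP, Finset.mul_sum]
    refine Finset.sum_congr rfl fun a ha => ?_
    rw [Finset.mem_range] at ha
    have ham : a ≤ m := Nat.lt_succ_iff.mp ha
    rw [map_mul, hz]
    calc c a * (z * t) ^ a * (z * (starRingEnd ℂ) t) ^ (m - a)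
        = (z ^ a * z ^ (m - a)) * (c a * t ^ a * (starRingEnd ℂ) t ^ (m - a)) := by
          rw [mul_pow, mul_pow]; ring
      _ = z ^ m * (c a * t ^ a * (starRingEnd ℂ) t ^ (m - a)) := by
          rw [← pow_add, Nat.add_sub_cancel' ham]
  obtain ⟨U, hU, hUn⟩ := hnonneg
  obtain ⟨ε, hε, hball⟩ := Metric.mem_nhds_iff.mp hU
  -- nonnegativity everywhere by scaling
  have hall : ∀ t, 0 ≤ (P t).re := by
    intro t
    set s : ℝ := ε / (2 * (‖t‖ + 1)) with hs
    have htpos : (0:ℝ) < ‖t‖ + 1 := by positivity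
    have hspos : 0 < s := by positivity
    have hmem : (s : ℂ) * t ∈ U := by
      apply hball
      simp only [Metric.mem_ball, dist_zero_right, norm_mul, Complex.norm_real,
        Real.norm_eq_abs, abs_of_pos hspos]
      have : s * ‖t‖ < s * (2 * (‖t‖ + 1)) := by nlinarith [norm_nonneg t]
      calc s * ‖t‖ < s * (2 * (‖t‖ + 1)) := this
        _ = ε := by rw [hs, div_mul_cancel₀]; positivity
    have h1 := hUn _ hmem
    have h2 : P ((s : ℂ) * t) = (s : ℂ) ^ m * P t := by
      apply hom
      simp [Complex.conj_ofReal]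
    rw [h2] at h1
    have h3 : ((s : ℂ) ^ m * P t).re = s ^ m * (P t).re := by
      rw [← Complex.ofReal_pow, Complex.re_ofReal_mul]
    rw [h3] at h1
    have hsm : 0 < s ^ m := by positivity
    nlinarith
  rcases Nat.even_or_odd m with he | ho
  · obtain ⟨k, hk⟩ := he; exact ⟨k, by omega⟩
  · exfalso
    obtain ⟨t, ht⟩ := hne
    have hneg : P (-t) = -P t := by
      have := hom (-1) (by simp) t
      rw [Odd.neg_one_pow ho] at this
      simpa using this
    have h1 := hall t
    have h2 := hall (-t)
    rw [hneg] at h2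
    simp only [Complex.neg_re] at h2
    apply ht
    apply Complex.ext
    · simp only [Complex.zero_re]; linarith
    · simpa using hreal t
end

section
/- Let P(t, t̄) = Σ_{a+b=m, a≥1, b≥1} c_{a,b} t^a t̄^b be a real-valued homogeneous polynomial of degree m in t and t̄ with no pure terms (no t^m or t̄^m term), P ≢ 0, and P(t, t̄) ≥ 0 for all t ∈ ℂ. Then m is even, m = 2k, and the coefficient c_{k,k} of |t|^{2k} is strictly positive. -/
open Complex Finset Real in
lemma geo_zero {N : ℕ} (hN : 0 < N) {d : ℤ} (hd : d ≠ 0) (hdN : d.natAbs < N) :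
    ∑ j ∈ Finset.range N, Complex.exp (2 * π * I * d / N) ^ j = 0 := by
  set x : ℂ := Complex.exp (2 * π * I * d / N) with hx
  have hN0 : (N : ℂ) ≠ 0 := Nat.cast_ne_zero.mpr hN.ne'
  have hxN : x ^ N = 1 := by
    rw [hx, ← Complex.exp_nat_mul]
    have h : (N : ℂ) * (2 * π * I * d / N) = d * (2 * π * I) := by
      field_simp
    rw [h, Complex.exp_int_mul_two_pi_mul_I]
  have hx1 : x ≠ 1 := by
    intro h
    rw [hx, Complex.exp_eq_one_iff] at h
    obtain ⟨n, hn⟩ := h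
    have hpi : (π : ℂ) ≠ 0 := by exact_mod_cast Real.pi_ne_zero
    have h2 : (d : ℂ) = n * N := by
      field_simp at hn
      have hpi2 : (2:ℂ) * π * Complex.I ≠ 0 := by simp [hpi, Complex.I_ne_zero]
      have h5 : (2:ℂ) * π * Complex.I * d = 2 * π * Complex.I * (n * N) := by
        linear_combination (2 * π * Complex.I) * hn
      exact mul_left_cancel₀ hpi2 h5
    have h3 : d = n * N := by exact_mod_cast h2
    have hdvd : (N : ℤ) ∣ d := ⟨n, by linarith⟩
    have h4 : N ∣ d.natAbs := Int.ofNat_dvd_right.mp (Int.dvd_natAbs.mpr hdvd)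
    have h5 : N ≤ d.natAbs := Nat.le_of_dvd (Int.natAbs_pos.mpr hd) h4
    omega
  rw [geom_sum_eq hx1, hxN]
  simp

open Complex Finset Real in
lemma key_sum (m N : ℕ) (hNdef : N = 2*m+1) (c : ℕ → ℂ) (r : ℤ) (hr : r.natAbs ≤ m) :
    ∑ j ∈ Finset.range N,
      (∑ a ∈ Finset.range (m+1), c a * Complex.exp (2*π*I*j/N) ^ a *
        (starRingEnd ℂ (Complex.exp (2*π*I*j/N))) ^ (m-a)) *
        Complex.exp (-(2*π*I*j*r/N))
      = (N : ℂ) * ∑ a ∈ Finset.range (m+1),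
          if 2*(a:ℤ) = m + r then c a else 0 := by
  have hN : 0 < N := by omega
  have hN0 : (N : ℂ) ≠ 0 := Nat.cast_ne_zero.mpr hN.ne'
  have step : ∀ j ∈ Finset.range N, ∀ a ∈ Finset.range (m+1),
      c a * Complex.exp (2*π*I*j/N) ^ a *
        (starRingEnd ℂ (Complex.exp (2*π*I*j/N))) ^ (m-a) *
        Complex.exp (-(2*π*I*j*r/N))
      = c a * Complex.exp (2*π*I*(2*(a:ℤ) - m - r)/N) ^ j := by
    intro j _ a haR
    have ha : a ≤ m := Nat.lt_succ_iff.mp (Finset.mem_range.mp haR)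
    have hconj : starRingEnd ℂ (Complex.exp (2*π*I*j/N)) =
        Complex.exp (-(2*π*I*j/N)) := by
      rw [← Complex.exp_conj]
      congr 1
      simp only [map_div₀, map_mul, Complex.conj_I, map_ofNat, map_natCast,
        Complex.conj_ofReal]
      ring
    rw [hconj, ← Complex.exp_nat_mul, ← Complex.exp_nat_mul, ← Complex.exp_nat_mul,
      mul_assoc, mul_assoc, ← Complex.exp_add, ← Complex.exp_add]
    congr 2
    have hma : ((m - a : ℕ) : ℂ) = (m : ℂ) - a := by
      push_cast [Nat.cast_sub ha]; ring
    rw [hma]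
    push_cast
    field_simp
    ring
  have h1 : ∑ j ∈ Finset.range N,
      (∑ a ∈ Finset.range (m+1), c a * Complex.exp (2*π*I*j/N) ^ a *
        (starRingEnd ℂ (Complex.exp (2*π*I*j/N))) ^ (m-a)) *
        Complex.exp (-(2*π*I*j*r/N))
      = ∑ j ∈ Finset.range N, ∑ a ∈ Finset.range (m+1),
          c a * Complex.exp (2*π*I*(2*(a:ℤ) - m - r)/N) ^ j :=
    Finset.sum_congr rfl (fun j hj => by
      rw [Finset.sum_mul]; exact Finset.sum_congr rfl (step j hj))
  rw [h1, Finset.sum_comm, Finset.mul_sum]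
  refine Finset.sum_congr rfl (fun a haR => ?_)
  have ha : a ≤ m := Nat.lt_succ_iff.mp (Finset.mem_range.mp haR)
  rw [← Finset.mul_sum]
  have hc : (2*((a:ℤ):ℂ) - (m:ℂ) - (r:ℂ)) = ((2*(a:ℤ) - m - r : ℤ) : ℂ) := by
    push_cast; ring
  rw [hc]
  by_cases hd : 2*(a:ℤ) = m + r
  · have hd0 : 2*(a:ℤ) - m - r = 0 := by omega
    rw [hd0]
    simp [hd]
    ring
  · have hd0 : (2*(a:ℤ) - m - r) ≠ 0 := by omega
    have hdN : (2*(a:ℤ) - m - r).natAbs < N := by omega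
    rw [geo_zero hN hd0 hdN]
    simp [hd]


open Complex Finset Real


/-- Let P(t,t̄) = Σ_{a+b=m, a≥1, b≥1} c_{a,b} t^a t̄^b be a real-valued homogeneous
polynomial of degree m in t and t̄ with no pure terms, P ≢ 0, and P(t,t̄) ≥ 0 for all
t ∈ ℂ. Then m is even, m = 2k, and the coefficient c_{k,k} of |t|^{2k} is strictly
positive. (Coefficients are indexed by a, with c a standing for c_{a, m-a}.) -/
theorem stmt_17 (m : ℕ) (c : ℕ → ℂ)
    (hpure0 : c 0 = 0) (hpurem : c m = 0)
    (P : ℂ → ℂ)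
    (hP : ∀ t, P t = ∑ a ∈ Finset.range (m + 1),
      c a * t ^ a * (starRingEnd ℂ t) ^ (m - a))
    (hreal : ∀ t, (P t).im = 0)
    (hne : ∃ t, P t ≠ 0)
    (hnonneg : ∀ t, 0 ≤ (P t).re) :
    ∃ k, m = 2 * k ∧ 0 < (c k).re ∧ (c k).im = 0 := by
  set N : ℕ := 2*m+1 with hNdef
  have hNpos : 0 < N := by omega
  have hN0 : (N : ℂ) ≠ 0 := Nat.cast_ne_zero.mpr hNpos.ne'
  set t : ℕ → ℂ := fun j => Complex.exp (2*π*I*j/(N:ℂ)) with ht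
  have hkey : ∀ r : ℤ, r.natAbs ≤ m →
      ∑ j ∈ Finset.range N, P (t j) * Complex.exp (-(2*π*I*j*r/(N:ℂ)))
      = (N : ℂ) * ∑ a ∈ Finset.range (m+1),
          if 2*(a:ℤ) = m + r then c a else 0 := by
    intro r hr
    simp only [ht, hP]
    exact key_sum m N hNdef c r hr
  have hPreal : ∀ z, P z = (((P z).re : ℝ) : ℂ) := by
    intro z
    exact Complex.ext (by simp) (by simp [hreal z])
  have hall : (∀ j ∈ Finset.range N, P (t j) = 0) → False := by
    intro h0
    have hc0 : ∀ a ∈ Finset.range (m+1), c a = 0 := by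
      intro a haR
      have ha : a ≤ m := Nat.lt_succ_iff.mp (Finset.mem_range.mp haR)
      have hr : (2*(a:ℤ) - m).natAbs ≤ m := by omega
      have hk := hkey (2*(a:ℤ) - m) hr
      rw [Finset.sum_eq_zero (fun j hj => by rw [h0 j hj, zero_mul])] at hk
      have hsingle : (∑ a' ∈ Finset.range (m+1),
          if 2*(a':ℤ) = m + (2*(a:ℤ) - m) then c a' else 0) = c a := by
        rw [Finset.sum_eq_single a]
        · simp
        · intro b _ hba
          have : ¬(2*(b:ℤ) = m + (2*(a:ℤ) - m)) := by
            intro h; apply hba; omega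
          rw [if_neg this]
        · intro h; exact absurd haR h
      rw [hsingle] at hk
      exact (mul_eq_zero.mp hk.symm).resolve_left hN0
    obtain ⟨z, hz⟩ := hne
    apply hz
    rw [hP]
    exact Finset.sum_eq_zero (fun a haR => by rw [hc0 a haR]; ring)
  have hkey0 := hkey 0 (by simp)
  have hw : ∀ j : ℕ, Complex.exp (-(2*π*I*j*((0:ℤ):ℂ)/(N:ℂ))) = 1 := by
    intro j; norm_num
  simp only [hw, mul_one] at hkey0
  have hsumre : ∑ j ∈ Finset.range N, P (t j)
      = (((∑ j ∈ Finset.range N, (P (t j)).re : ℝ)) : ℂ) := by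
    push_cast
    exact Finset.sum_congr rfl (fun j _ => hPreal _)
  set R : ℝ := ∑ j ∈ Finset.range N, (P (t j)).re with hR
  have hRnonneg : 0 ≤ R := Finset.sum_nonneg (fun j _ => hnonneg _)
  have hRzero : R = 0 → False := by
    intro h
    apply hall
    intro j hj
    have := (Finset.sum_eq_zero_iff_of_nonneg (fun j _ => hnonneg (t j))).mp h j hj
    rw [hPreal (t j), this]
    simp
  -- m must be even
  rcases Nat.even_or_odd m with he | ho
  · obtain ⟨k, hk⟩ := he
    have hS : (∑ a ∈ Finset.range (m+1), if 2*(a:ℤ) = m + (0:ℤ) then c a else 0)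
        = c k := by
      rw [Finset.sum_eq_single k]
      · rw [if_pos (by omega)]
      · intro b _ hbk
        have : ¬(2*(b:ℤ) = m + (0:ℤ)) := by intro h; apply hbk; omega
        rw [if_neg this]
      · intro h
        exact absurd (Finset.mem_range.mpr (by omega)) h
    rw [hS, hsumre] at hkey0
    obtain ⟨hre, him⟩ := Complex.ext_iff.mp hkey0
    simp [Complex.mul_re, Complex.mul_im] at hre him
    have hNR : (0:ℝ) < N := by positivity
    refine ⟨k, by omega, ?_, him⟩
    rcases lt_trichotomy ((c k).re) 0 with h | h | h
    · exfalso; nlinarith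
    · exfalso; exact hRzero (by rw [hre, h, mul_zero])
    · exact h
  · exfalso
    have hS : (∑ a ∈ Finset.range (m+1), if 2*(a:ℤ) = m + (0:ℤ) then c a else 0) = 0 := by
      apply Finset.sum_eq_zero
      intro a _
      have : ¬(2*(a:ℤ) = m + (0:ℤ)) := by
        obtain ⟨p, hp⟩ := ho; omega
      rw [if_neg this]
    rw [hS, mul_zero, hsumre] at hkey0
    exact hRzero (by exact_mod_cast hkey0)
end
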